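/- Suppose the per-iteration oracle cost is oc(α) = c₀ + c₁/(min{τ, κ·α})² for constants c₀, c₁ ≥ 0, κ > 0, and τ ≥ κ·ᾱ, and that γ > (2q)^{1/2}. Then there exists a constant C > 0, depending only on p and γ, such that for every integer n ≥ 2, E[ TOC(min{T, n}) ] ≤ C · ( c₀·n + (c₁/(κ·ᾱ)²) · n · (log n) · n^{2·log(1/γ)/log(p/q)} ). -/

import Mathlib

open MeasureTheory ProbabilityTheory

private lemma aux_ocG {ᾱ κ τ c₁ a : ℝ} (hᾱ : 0 < ᾱ) (hκ : 0 < κ) (hτ : κ * ᾱ ≤ τ)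
    (hc₁ : 0 ≤ c₁) (ha : 0 < a) :
    c₁ / (min τ (κ * a)) ^ 2 ≤ c₁ / (κ * ᾱ) ^ 2 * max 1 ((ᾱ / a) ^ 2) := by
  have hκᾱ : (0:ℝ) < κ * ᾱ := by positivity
  have hmin0 : 0 < min τ (κ * a) := lt_min (lt_of_lt_of_le hκᾱ hτ) (by positivity)
  have hkeyb : (κ * ᾱ) ^ 2 ≤ (min τ (κ * a)) ^ 2 * max 1 ((ᾱ / a) ^ 2) := by
    by_cases hca : a ≤ ᾱ
    · have hmineq : min τ (κ * a) = κ * a :=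
        min_eq_right (le_trans (by nlinarith) hτ)
      have h1 : (ᾱ / a) ^ 2 ≤ max 1 ((ᾱ / a) ^ 2) := le_max_right _ _
      have h2 : (κ * a) ^ 2 * (ᾱ / a) ^ 2 = (κ * ᾱ) ^ 2 := by
        field_simp
      rw [hmineq]
      nlinarith [pow_pos (mul_pos hκ ha) 2]
    · push_neg at hca
      have h1 : κ * ᾱ ≤ min τ (κ * a) := le_min hτ (by nlinarith)
      have h2 : (κ * ᾱ) ^ 2 ≤ (min τ (κ * a)) ^ 2 := by nlinarith
      have h3 : (1:ℝ) ≤ max 1 ((ᾱ / a) ^ 2) := le_max_left _ _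
      nlinarith [pow_pos hmin0 2]
  rw [div_mul_eq_mul_div, div_le_div_iff₀ (pow_pos hmin0 2) (pow_pos hκᾱ 2)]
  nlinarith [mul_le_mul_of_nonneg_left hkeyb hc₁]


set_option maxHeartbeats 1000000 in
private lemma aux_key
    {Ω : Type} {mΩ : MeasurableSpace Ω} {μ : Measure Ω} [IsProbabilityMeasure μ]
    {F : Filtration ℕ mΩ} {A : ℕ → Ω → ℝ} {T : Ω → ℕ} {k : ℕ}
    {γ p ᾱ αmax z ρ : ℝ}
    (hp : 1/2 < p) (hp1 : p < 1) (hγ0 : 0 < γ) (hγ1 : γ < 1) (hᾱ : 0 < ᾱ)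
    (hαmax1 : ᾱ ≤ αmax)
    (hz_def : z = (γ ^ 2)⁻¹) (hρ_def : ρ = (1 - p) * z + p * γ ^ 2)
    (hA : Adapted F A) (hApos : ∀ k x, 0 < A k x) (hT : IsStoppingTime F (fun x => (T x : WithTop ℕ)))
    (hdich : ∀ᵐ x ∂μ,
      A (k+1) x = γ * A k x ∨ A (k+1) x = min αmax (γ⁻¹ * A k x))
    (hprob : ∀ᵐ x ∂μ, (k < T x ∧ A k x ≤ ᾱ) →
      p ≤ (μ[Set.indicator {x' | A (k+1) x' = min αmax (γ⁻¹ * A k x')}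
              (fun _ => (1:ℝ)) | F k]) x)
    {G : ℝ → ℝ} (hG_def : G = fun a => max 1 ((ᾱ / a) ^ 2))
    (hGmeas : ∀ m : ℕ, StronglyMeasurable[F m] (fun x => G (A m x)))
    (hGint : ∀ m : ℕ, Integrable (fun x => G (A m x)) μ) :
    ∫ x in {x | k+1 ≤ T x}, G (A (k+1) x) ∂μ
      ≤ ρ * ∫ x in {x | k ≤ T x}, G (A k x) ∂μ + z := by
  have hγn0 : γ ≠ 0 := ne_of_gt hγ0
  have hγsq0 : (0:ℝ) < γ ^ 2 := by positivity
  have hγsq1 : γ ^ 2 < 1 := by nlinarith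
  have hz1 : 1 < z := by rw [hz_def]; exact (one_lt_inv₀ hγsq0).2 hγsq1
  have hz0 : 0 < z := by linarith
  have hzγ : z * γ ^ 2 = 1 := by rw [hz_def]; exact inv_mul_cancel₀ (ne_of_gt hγsq0)
  have hρ0 : 0 < ρ := by
    rw [hρ_def]
    nlinarith [mul_pos (show (0:ℝ) < 1 - p by linarith) hz0,
      mul_pos (show (0:ℝ) < p by linarith) hγsq0]
  have hG1 : ∀ a, 1 ≤ G a := by intro a; rw [hG_def]; exact le_max_left _ _
  have hG0 : ∀ a, 0 ≤ G a := fun a => le_trans zero_le_one (hG1 a)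
  have hGsmall : ∀ a, 0 < a → a ≤ ᾱ → G a = (ᾱ / a) ^ 2 := by
    intro a ha hale
    rw [hG_def]
    refine max_eq_right ?_
    have h1 : 1 ≤ ᾱ / a := (one_le_div ha).2 hale
    nlinarith
  have hGbig : ∀ a, 0 < a → ᾱ ≤ a → G a = 1 := by
    intro a ha hale
    rw [hG_def]
    refine max_eq_left ?_
    have h1 : ᾱ / a ≤ 1 := (div_le_one ha).2 hale
    have h2 : 0 ≤ ᾱ / a := div_nonneg hᾱ.le ha.le
    nlinarith
  have hAm : ∀ m : ℕ, Measurable (A m) := fun m =>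
    (hA m).mono (F.le m) le_rfl
  obtain ⟨s, hs_def⟩ : ∃ s : Set Ω, s = {x | k < T x} := ⟨_, rfl⟩
  have hsFk : MeasurableSet[F k] s := by
    rw [hs_def]
    have h := (hT k).compl
    rw [show {x | k < T x} = {x | ((T x : ℕ) : WithTop ℕ) ≤ (k : WithTop ℕ)}ᶜ by ext x; simp]
    exact h
  have hsm : MeasurableSet s := F.le k _ hsFk
  obtain ⟨D, hD_def⟩ : ∃ D : Set Ω,
      D = {x' | A (k+1) x' = min αmax (γ⁻¹ * A k x')} := ⟨_, rfl⟩
  have hDm : MeasurableSet D := by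
    rw [hD_def]
    exact measurableSet_eq_fun (hAm (k+1))
      (measurable_const.min ((hAm k).const_mul γ⁻¹))
  obtain ⟨ind, hind_def⟩ : ∃ ind : Ω → ℝ,
      ind = Set.indicator D (fun _ => (1:ℝ)) := ⟨_, rfl⟩
  obtain ⟨U, hU_def⟩ : ∃ U : Ω → ℝ, U = fun x => z * G (A k x) := ⟨_, rfl⟩
  obtain ⟨V, hV_def⟩ : ∃ V : Ω → ℝ,
      V = fun x => max 1 (γ ^ 2 * G (A k x)) := ⟨_, rfl⟩
  have hUmeas : StronglyMeasurable[F k] U := by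
    rw [hU_def]; exact (hGmeas k).const_mul z
  have hVmeas : StronglyMeasurable[F k] V := by
    rw [hV_def]
    exact (measurable_const.max (((hGmeas k).measurable).const_mul _)).stronglyMeasurable
  have hUint : Integrable U μ := by rw [hU_def]; exact (hGint k).const_mul z
  have hU0 : ∀ x, 0 ≤ U x := by
    intro x; rw [hU_def]; exact mul_nonneg hz0.le (hG0 _)
  have hV0 : ∀ x, 0 ≤ V x := by
    intro x; rw [hV_def]; exact le_trans zero_le_one (le_max_left _ _)
  have hVU : ∀ x, V x ≤ U x := by
    intro x
    rw [hU_def, hV_def]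
    refine max_le ?_ ?_
    · simp only
      nlinarith [hG1 (A k x)]
    · simp only
      nlinarith [hG0 (A k x), hG1 (A k x)]
  have hVle : ∀ x, V x ≤ 1 + γ ^ 2 * G (A k x) := by
    intro x
    rw [hV_def]
    refine max_le (by nlinarith [hG0 (A k x)]) (by nlinarith [hG0 (A k x)])
  have hVint : Integrable V μ := by
    refine Integrable.mono' ((integrable_const 1).add ((hGint k).const_mul (γ ^ 2)))
      ((hVmeas.mono (F.le k)).aestronglyMeasurable) ?_
    filter_upwards with x
    rw [Real.norm_eq_abs, abs_of_nonneg (hV0 x)]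
    exact hVle x
  have hindm : Measurable ind := by
    rw [hind_def]; exact measurable_const.indicator hDm
  have hind0 : ∀ x, 0 ≤ ind x := by
    intro x; rw [hind_def]; exact Set.indicator_nonneg (fun _ _ => zero_le_one) x
  have hind1 : ∀ x, ind x ≤ 1 := by
    intro x
    rw [hind_def]
    by_cases hx : x ∈ D <;> simp [Set.indicator_apply, hx]
  have hindD : ∀ x, x ∈ D → ind x = 1 := by
    intro x hx; rw [hind_def]; simp [Set.indicator_apply, hx]
  have hindDc : ∀ x, x ∉ D → ind x = 0 := by
    intro x hx; rw [hind_def]; simp [Set.indicator_apply, hx]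
  have hind_int : Integrable ind μ := by
    refine Integrable.mono' (integrable_const 1) hindm.aestronglyMeasurable ?_
    filter_upwards with x
    rw [Real.norm_eq_abs, abs_of_nonneg (hind0 x)]
    exact hind1 x
  obtain ⟨g, hg_def⟩ : ∃ g : Ω → ℝ, g = (V - U) * ind := ⟨_, rfl⟩
  have hg_apply : ∀ x, g x = (V x - U x) * ind x := by
    intro x; rw [hg_def]; simp
  have hgm : AEStronglyMeasurable g μ := by
    rw [hg_def]
    exact (((hVmeas.sub hUmeas).mono (F.le k)).aestronglyMeasurable).mul
      hindm.aestronglyMeasurable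
  have hgint : Integrable g μ := by
    refine Integrable.mono' hUint hgm ?_
    filter_upwards with x
    rw [hg_apply x, Real.norm_eq_abs, abs_mul]
    have h1 : |V x - U x| ≤ U x := by
      rw [abs_le]
      constructor
      · nlinarith [hV0 x]
      · nlinarith [hVU x, hU0 x]
    have h2 : |ind x| ≤ 1 := by
      rw [abs_of_nonneg (hind0 x)]; exact hind1 x
    calc |V x - U x| * |ind x| ≤ U x * 1 :=
          mul_le_mul h1 h2 (abs_nonneg _) (hU0 x)
      _ = U x := mul_one _
  -- pointwise a.e. domination of G (A (k+1)) by U + (V - U) * ind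
  have ha : ∀ᵐ x ∂μ, G (A (k+1) x) ≤ U x + (V x - U x) * ind x := by
    filter_upwards [hdich] with x hx
    by_cases hxD : x ∈ D
    · -- downward (success) branch
      rw [hindD x hxD]
      have hAeq : A (k+1) x = min αmax (γ⁻¹ * A k x) := by
        rw [hD_def] at hxD; exact hxD
      have hGle : G (A (k+1) x) ≤ V x := by
        by_cases hsmall : A k x ≤ γ * ᾱ
        · have hle : γ⁻¹ * A k x ≤ ᾱ := by
            rw [inv_mul_eq_div, div_le_iff₀ hγ0]
            linarith [hsmall]
          have hmin : A (k+1) x = γ⁻¹ * A k x := by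
            rw [hAeq]; exact min_eq_right (le_trans hle hαmax1)
          have hpos : 0 < γ⁻¹ * A k x := mul_pos (by positivity) (hApos k x)
          have h1 : G (A (k+1) x) = (ᾱ / (γ⁻¹ * A k x)) ^ 2 := by
            rw [hmin]; exact hGsmall _ hpos (by rw [← hmin]; rw [hmin]; exact hle)
          have h2 : (ᾱ / (γ⁻¹ * A k x)) ^ 2 = γ ^ 2 * (ᾱ / A k x) ^ 2 := by
            have hAne : A k x ≠ 0 := (hApos k x).ne'
            field_simp
          have h3 : A k x ≤ ᾱ := le_trans hsmall (by nlinarith)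
          have h4 : G (A k x) = (ᾱ / A k x) ^ 2 := hGsmall _ (hApos k x) h3
          rw [hV_def]
          simp only
          rw [h1, h2, h4]
          exact le_max_right _ _
        · push_neg at hsmall
          have h1 : ᾱ ≤ γ⁻¹ * A k x := by
            rw [inv_mul_eq_div, le_div_iff₀ hγ0]
            linarith [hsmall]
          have h2 : ᾱ ≤ A (k+1) x := by
            rw [hAeq]; exact le_min hαmax1 h1
          have h3 : G (A (k+1) x) = 1 := hGbig _ (hApos (k+1) x) h2
          rw [h3, hV_def]
          exact le_max_left _ _
      linarith [hGle]
    · -- upward (decrease) branch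
      rw [hindDc x hxD, mul_zero, add_zero]
      have hAeq : A (k+1) x = γ * A k x := by
        rcases hx with hx | hx
        · exact hx
        · exfalso; apply hxD; rw [hD_def]; exact hx
      rw [hAeq, hU_def]
      simp only
      have h1 : (ᾱ / (γ * A k x)) ^ 2 = z * (ᾱ / A k x) ^ 2 := by
        have hAne : A k x ≠ 0 := (hApos k x).ne'
        rw [hz_def]
        field_simp
      rw [hG_def]
      simp only
      refine max_le ?_ ?_
      · nlinarith [le_max_left (1:ℝ) ((ᾱ / A k x) ^ 2),
          le_max_right (1:ℝ) ((ᾱ / A k x) ^ 2)]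
      · rw [h1]
        nlinarith [le_max_right (1:ℝ) ((ᾱ / A k x) ^ 2)]
  -- conditional expectation computation
  obtain ⟨φ, hφ_def⟩ : ∃ φ : Ω → ℝ, φ = U + g := ⟨_, rfl⟩
  have hφ_apply : ∀ x, φ x = U x + (V x - U x) * ind x := by
    intro x; rw [hφ_def]; simp [hg_apply x]
  have hφint : Integrable φ μ := by rw [hφ_def]; exact hUint.add hgint
  have hcond1 : μ[fun x => G (A (k+1) x)|F k] ≤ᵐ[μ] μ[φ|F k] := by
    refine condExp_mono (hGint (k+1)) hφint ?_
    filter_upwards [ha] with x hx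
    rw [hφ_apply x]
    exact hx
  have hcond2 : μ[φ|F k] =ᵐ[μ] μ[U|F k] + μ[g|F k] := by
    rw [hφ_def]; exact condExp_add hUint hgint _
  have hcondU : μ[U|F k] = U :=
    condExp_of_stronglyMeasurable (F.le k) hUmeas hUint
  have hcondg : μ[g|F k] =ᵐ[μ] (V - U) * μ[ind|F k] := by
    rw [hg_def]
    exact condExp_mul_of_stronglyMeasurable_left (hVmeas.sub hUmeas) (hg_def ▸ hgint) hind_int
  have hW0 : ∀ᵐ x ∂μ, 0 ≤ (μ[ind|F k]) x := by
    have h := condExp_nonneg (m := F k) (μ := μ)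
      (Filter.Eventually.of_forall hind0)
    filter_upwards [h] with x hx
    simpa using hx
  have hW1 : ∀ᵐ x ∂μ, (μ[ind|F k]) x ≤ 1 := by
    have h1 : μ[ind|F k] ≤ᵐ[μ] μ[fun _ => (1:ℝ)|F k] :=
      condExp_mono hind_int (integrable_const 1) (Filter.Eventually.of_forall hind1)
    have h2 : μ[fun _ => (1:ℝ)|F k] = fun _ => (1:ℝ) := condExp_const (F.le k) 1
    rw [h2] at h1
    filter_upwards [h1] with x hx
    simpa using hx
  -- W coincides with the conditional probability in the hypothesis
  have hprob' : ∀ᵐ x ∂μ, (k < T x ∧ A k x ≤ ᾱ) → p ≤ (μ[ind|F k]) x := by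
    rw [hind_def, hD_def]
    exact hprob
  -- the a.e. bound on the conditional expectation, on the event s
  have hce : ∀ᵐ x ∂μ, x ∈ s → (μ[fun x => G (A (k+1) x)|F k]) x ≤ ρ * G (A k x) + z := by
    filter_upwards [hcond1, hcond2, hcondg, hW0, hW1, hprob'] with x h1 h2 h4 hw0 hw1 hpx hxs
    have hkT : k < T x := by rw [hs_def] at hxs; exact hxs
    have hval : (μ[φ|F k]) x = U x + (V x - U x) * (μ[ind|F k]) x := by
      rw [h2]
      simp only [Pi.add_apply]
      rw [h4, hcondU]
      simp
    refine le_trans h1 ?_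
    rw [hval]
    by_cases hAle : A k x ≤ ᾱ
    · have hWp : p ≤ (μ[ind|F k]) x := hpx ⟨hkT, hAle⟩
      have hVUx : V x - U x ≤ 0 := sub_nonpos.2 (hVU x)
      have step1 : U x + (V x - U x) * (μ[ind|F k]) x ≤ U x + (V x - U x) * p := by
        nlinarith
      by_cases hsmall : A k x ≤ γ * ᾱ
      · have hVeq : V x = γ ^ 2 * G (A k x) := by
          rw [hV_def]
          simp only
          refine max_eq_right ?_
          have hge : γ⁻¹ ≤ ᾱ / A k x := by
            rw [le_div_iff₀ (hApos k x), inv_mul_eq_div, div_le_iff₀ hγ0]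
            linarith
          have h5 : G (A k x) = (ᾱ / A k x) ^ 2 := hGsmall _ (hApos k x) hAle
          have h6 : (γ⁻¹) ^ 2 ≤ (ᾱ / A k x) ^ 2 :=
            pow_le_pow_left₀ (by positivity) hge 2
          have h7 : γ ^ 2 * (γ⁻¹) ^ 2 = 1 := by field_simp
          nlinarith
        have heq : U x + (V x - U x) * p = ρ * G (A k x) := by
          rw [hU_def, hVeq, hρ_def]
          simp only
          ring
        rw [heq] at step1
        linarith [step1]
      · push_neg at hsmall
        have hVeq : V x = 1 := by
          rw [hV_def]
          simp only
          refine max_eq_left ?_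
          have hlt : ᾱ / A k x < γ⁻¹ := by
            rw [div_lt_iff₀ (hApos k x)]
            have h10 : γ⁻¹ * (γ * ᾱ) = ᾱ := by field_simp
            have h11 : γ⁻¹ * (γ * ᾱ) < γ⁻¹ * A k x :=
              mul_lt_mul_of_pos_left hsmall (by positivity)
            linarith
          have h5 : G (A k x) = (ᾱ / A k x) ^ 2 := hGsmall _ (hApos k x) hAle
          have h6 : 0 ≤ ᾱ / A k x := div_nonneg hᾱ.le (hApos k x).le
          have h7 : (ᾱ / A k x) ^ 2 < (γ⁻¹) ^ 2 := by nlinarith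
          have h8 : γ ^ 2 * (γ⁻¹) ^ 2 = 1 := by field_simp
          nlinarith
        have hUx : U x = z * G (A k x) := by rw [hU_def]
        have hρz : (1 - p) * z ≤ ρ := by rw [hρ_def]; nlinarith
        have h9 : (1 - p) * z * G (A k x) ≤ ρ * G (A k x) :=
          mul_le_mul_of_nonneg_right hρz (hG0 _)
        rw [hVeq, hUx] at step1 ⊢
        nlinarith [step1, hG0 (A k x)]
    · push_neg at hAle
      have hGx : G (A k x) = 1 := hGbig _ (hApos k x) hAle.le
      have hUx : U x = z := by rw [hU_def]; simp [hGx]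
      have hVUx : V x - U x ≤ 0 := sub_nonpos.2 (hVU x)
      have h5 : U x + (V x - U x) * (μ[ind|F k]) x ≤ U x := by
        nlinarith [mul_nonneg (neg_nonneg.2 hVUx) hw0]
      rw [hGx]
      linarith [h5, hUx, hρ0]
  -- integrate over s
  have hseteq : {x | k+1 ≤ T x} = s := by
    rw [hs_def]; ext x; simp [Nat.add_one_le_iff]
  rw [hseteq]
  have hstep1 : ∫ x in s, G (A (k+1) x) ∂μ
      = ∫ x in s, (μ[fun x => G (A (k+1) x)|F k]) x ∂μ :=
    (setIntegral_condExp (F.le k) (hGint (k+1)) hsFk).symm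
  have hstep2 : ∫ x in s, (μ[fun x => G (A (k+1) x)|F k]) x ∂μ
      ≤ ∫ x in s, (ρ * G (A k x) + z) ∂μ := by
    refine setIntegral_mono_ae_restrict (integrable_condExp.integrableOn)
      ((((hGint k).const_mul ρ).add (integrable_const z)).integrableOn) ?_
    exact (ae_restrict_iff' hsm).2 hce
  have hstep3 : ∫ x in s, (ρ * G (A k x) + z) ∂μ
      = ρ * ∫ x in s, G (A k x) ∂μ + z * (μ s).toReal := by
    rw [integral_add (((hGint k).const_mul ρ).integrableOn)
      (integrableOn_const (measure_lt_top μ _).ne)]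
    rw [integral_const_mul, setIntegral_const, smul_eq_mul, measureReal_def]
    ring
  have hsub : ∫ x in s, G (A k x) ∂μ ≤ ∫ x in {x | k ≤ T x}, G (A k x) ∂μ := by
    refine setIntegral_mono_set ((hGint k).integrableOn)
      (Filter.Eventually.of_forall (fun x => hG0 _)) ?_
    refine HasSubset.Subset.eventuallyLE ?_
    rw [hs_def]
    intro x hx
    simp only [Set.mem_setOf_eq] at hx ⊢
    exact hx.le
  have hmle : (μ s).toReal ≤ 1 :=
    ENNReal.toReal_le_of_le_ofReal zero_le_one (by simpa using prob_le_one)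
  calc ∫ x in s, G (A (k+1) x) ∂μ ≤ ∫ x in s, (ρ * G (A k x) + z) ∂μ := by
        rw [hstep1]; exact hstep2
    _ = ρ * ∫ x in s, G (A k x) ∂μ + z * (μ s).toReal := hstep3
    _ ≤ ρ * ∫ x in {x | k ≤ T x}, G (A k x) ∂μ + z := by
        have h1 := mul_le_mul_of_nonneg_left hsub hρ0.le
        have h2 : z * (μ s).toReal ≤ z := by nlinarith [ENNReal.toReal_nonneg (a := μ s)]
        linarith

set_option maxHeartbeats 2000000 in
/-- Expected total sample complexity of SASS: with per-iteration
oracle cost `oc(α) = c₀ + c₁/(min{τ, κ·α})²`, `τ ≥ κ·ᾱ`, and `γ > (2q)^{1/2}`, there is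
a constant `C > 0` depending only on `p` and `γ` such that for every admissible process
and every `n ≥ 2`,
`E[TOC(min{T, n})] ≤ C·(c₀·n + (c₁/(κ·ᾱ)²)·n·(log n)·n^{2 log(1/γ)/log(p/q)})`. -/
theorem stmt_16
    (p γ : ℝ) (hp : 1/2 < p) (hp1 : p < 1) (hγ0 : 0 < γ) (hγ1 : γ < 1)
    (hγq : Real.sqrt (2 * (1 - p)) < γ) :
    ∃ C > 0,
      ∀ (Ω : Type) (mΩ : MeasurableSpace Ω) (μ : Measure Ω),
        IsProbabilityMeasure μ →
      ∀ (F : Filtration ℕ mΩ) (A : ℕ → Ω → ℝ) (T : Ω → ℕ)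
        (ᾱ c₀ c₁ κ τ : ℝ) (j j' : ℤ) (αmax : ℝ),
        0 < ᾱ → 0 ≤ c₀ → 0 ≤ c₁ → 0 < κ → κ * ᾱ ≤ τ → j ≤ 0 → j' ≤ 0 →
        αmax = ᾱ * γ ^ j' →
        Adapted F A → (∀ k x, 0 < A k x) → IsStoppingTime F (fun x => (T x : WithTop ℕ)) →
        (∀ x, A 0 x = ᾱ * γ ^ j) →
        (∀ k, ∀ᵐ x ∂μ,
          A (k+1) x = γ * A k x ∨ A (k+1) x = min αmax (γ⁻¹ * A k x)) →
        (∀ k, ∀ᵐ x ∂μ, (k < T x ∧ A k x ≤ ᾱ) →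
          p ≤ (μ[Set.indicator {x' | A (k+1) x' = min αmax (γ⁻¹ * A k x')}
                  (fun _ => (1:ℝ)) | F k]) x) →
        ∀ n : ℕ, 2 ≤ n →
          ∫ x, (∑ k ∈ Finset.Icc 1 (min (T x) n),
              (c₀ + c₁ / (min τ (κ * A k x))^2)) ∂μ ≤
            C * (c₀ * n
              + c₁ / (κ * ᾱ)^2 * n * Real.log n
                  * (n : ℝ) ^ (2 * Real.log (1/γ) / Real.log (p/(1-p)))) := by
  have hq0 : (0:ℝ) < 1 - p := by linarith
  have hγsq0 : (0:ℝ) < γ ^ 2 := by positivity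
  have hγsq1 : γ ^ 2 < 1 := by nlinarith
  have hγ2 : 2 * (1 - p) < γ ^ 2 := by
    nlinarith [Real.sq_sqrt (show (0:ℝ) ≤ 2 * (1 - p) by linarith),
      Real.sqrt_nonneg (2 * (1 - p))]
  obtain ⟨z, hz_def⟩ : ∃ z : ℝ, z = (γ ^ 2)⁻¹ := ⟨_, rfl⟩
  have hz1 : 1 < z := by rw [hz_def]; exact (one_lt_inv₀ hγsq0).2 hγsq1
  have hz0 : 0 < z := by linarith
  have hzγ : z * γ ^ 2 = 1 := by rw [hz_def]; exact inv_mul_cancel₀ (ne_of_gt hγsq0)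
  obtain ⟨ρ, hρ_def⟩ : ∃ ρ : ℝ, ρ = (1 - p) * z + p * γ ^ 2 := ⟨_, rfl⟩
  have hρ0 : 0 < ρ := by rw [hρ_def]; positivity
  have hρ1 : ρ < 1 := by
    have h1 : 0 < (1 - γ ^ 2) * (p * γ ^ 2 - (1 - p)) :=
      mul_pos (by linarith) (by nlinarith)
    have h2 : ρ * γ ^ 2 = (1 - p) * (z * γ ^ 2) + p * γ ^ 4 := by
      rw [hρ_def]; ring
    rw [hzγ] at h2
    nlinarith
  obtain ⟨B, hB_def⟩ : ∃ B : ℝ, B = 1 + z / (1 - ρ) := ⟨_, rfl⟩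
  have hzρ : 0 < z / (1 - ρ) := div_pos hz0 (by linarith)
  have hB0 : 0 < B := by rw [hB_def]; linarith
  have hB1ρ : (1 - ρ) * B = (1 - ρ) + z := by
    rw [hB_def, mul_add, mul_one, mul_div_cancel₀ _ (show (1:ℝ) - ρ ≠ 0 by linarith)]
  have hlog2 : 0 < Real.log 2 := Real.log_pos one_lt_two
  have hlog2' : Real.log 2 ≤ 1 := by
    have := Real.log_le_sub_one_of_pos (show (0:ℝ) < 2 by norm_num); linarith
  obtain ⟨C, hC_def⟩ : ∃ C : ℝ, C = (1 + B) / Real.log 2 := ⟨_, rfl⟩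
  have hC1B : C * Real.log 2 = 1 + B := by
    rw [hC_def]; field_simp
  have hC1 : 1 ≤ C := by
    rw [hC_def, le_div_iff₀ hlog2]; nlinarith
  have hC0 : 0 < C := by linarith
  refine ⟨C, hC0, ?_⟩
  intro Ω mΩ μ hμ F A T ᾱ c₀ c₁ κ τ j j' αmax hᾱ hc₀ hc₁ hκ hτ hj hj' hαmax
    hA hApos hT hA0 hdich hprob n hn
  have hγn0 : γ ≠ 0 := ne_of_gt hγ0
  have hγinv1 : 1 ≤ γ⁻¹ := (one_le_inv₀ hγ0).2 hγ1.le
  have hαmax1 : ᾱ ≤ αmax := by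
    rw [hαmax]
    nth_rewrite 1 [show ᾱ = ᾱ * 1 by ring]
    exact mul_le_mul_of_nonneg_left (one_le_zpow_of_nonpos₀ hγ0 hγ1.le hj') hᾱ.le
  have hA0' : ∀ x, ᾱ ≤ A 0 x := by
    intro x; rw [hA0 x]
    nth_rewrite 1 [show ᾱ = ᾱ * 1 by ring]
    exact mul_le_mul_of_nonneg_left (one_le_zpow_of_nonpos₀ hγ0 hγ1.le hj) hᾱ.le
  -- the Lyapunov function
  obtain ⟨G, hG_def⟩ : ∃ G : ℝ → ℝ, G = fun a => max 1 ((ᾱ / a) ^ 2) := ⟨_, rfl⟩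
  have hG1 : ∀ a, 1 ≤ G a := by intro a; rw [hG_def]; exact le_max_left _ _
  have hG0 : ∀ a, 0 ≤ G a := fun a => le_trans zero_le_one (hG1 a)
  have hGR : ∀ a, (ᾱ / a) ^ 2 ≤ G a := by intro a; rw [hG_def]; exact le_max_right _ _
  -- value of G in the two regimes
  have hGsmall : ∀ a, 0 < a → a ≤ ᾱ → G a = (ᾱ / a) ^ 2 := by
    intro a ha hale
    rw [hG_def]
    refine max_eq_right ?_
    have h1 : 1 ≤ ᾱ / a := (one_le_div ha).2 hale
    nlinarith
  have hGbig : ∀ a, 0 < a → ᾱ ≤ a → G a = 1 := by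
    intro a ha hale
    rw [hG_def]
    refine max_eq_left ?_
    have h1 : ᾱ / a ≤ 1 := (div_le_one ha).2 hale
    have h2 : 0 ≤ ᾱ / a := div_nonneg hᾱ.le ha.le
    nlinarith
  -- lower bound on A k
  have hlow : ∀ k : ℕ, ∀ᵐ x ∂μ, ᾱ * γ ^ k ≤ A k x := by
    intro k
    induction k with
    | zero =>
      filter_upwards with x
      simpa using hA0' x
    | succ k ih =>
      filter_upwards [ih, hdich k] with x h1 h2
      rcases h2 with h2 | h2
      · rw [h2, pow_succ]; nlinarith
      · rw [h2]
        have h3 : ᾱ * γ ^ (k+1) ≤ αmax := by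
          refine le_trans ?_ hαmax1
          nth_rewrite 2 [show ᾱ = ᾱ * 1 by ring]
          exact mul_le_mul_of_nonneg_left (pow_le_one₀ hγ0.le hγ1.le) hᾱ.le
        have h4 : ᾱ * γ ^ (k+1) ≤ γ⁻¹ * A k x := by
          have h5 : A k x ≤ γ⁻¹ * A k x := le_mul_of_one_le_left (hApos k x).le hγinv1
          have h6 : ᾱ * γ ^ (k+1) ≤ ᾱ * γ ^ k :=
            mul_le_mul_of_nonneg_left
              (pow_le_pow_of_le_one hγ0.le hγ1.le (Nat.le_succ k)) hᾱ.le
          linarith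
        exact le_min h3 h4
  -- a.e. upper bound on G (A k)
  have hGb : ∀ k : ℕ, ∀ᵐ x ∂μ, G (A k x) ≤ ((γ ^ k)⁻¹) ^ 2 := by
    intro k
    filter_upwards [hlow k] with x hx
    have hpk : (0:ℝ) < γ ^ k := pow_pos hγ0 k
    have h1 : ᾱ / A k x ≤ (γ ^ k)⁻¹ := by
      rw [div_le_iff₀ (hApos k x), inv_mul_eq_div, le_div_iff₀ hpk]
      linarith
    have h2 : (1:ℝ) ≤ (γ ^ k)⁻¹ := (one_le_inv₀ hpk).2 (pow_le_one₀ hγ0.le hγ1.le)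
    have h3 : (ᾱ / A k x) ^ 2 ≤ ((γ ^ k)⁻¹) ^ 2 :=
      pow_le_pow_left₀ (div_nonneg hᾱ.le (hApos k x).le) h1 2
    rw [hG_def]
    exact max_le (by nlinarith) h3
  -- measurability of A k w.r.t. the ambient σ-algebra
  have hAm : ∀ k : ℕ, Measurable (A k) := fun k =>
    (hA k).mono (F.le k) le_rfl
  -- measurability of G ∘ A k
  have hGmeas : ∀ k : ℕ, StronglyMeasurable[F k] (fun x => G (A k x)) := by
    intro k
    simp only [hG_def]
    exact (measurable_const.max
      ((measurable_const.div (hA k)).pow_const 2)).stronglyMeasurable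
  have hGint : ∀ k : ℕ, Integrable (fun x => G (A k x)) μ := by
    intro k
    refine Integrable.mono' (integrable_const (((γ ^ k)⁻¹) ^ 2))
      ((hGmeas k).mono (F.le k)).aestronglyMeasurable ?_
    filter_upwards [hGb k] with x hx
    rw [Real.norm_eq_abs, abs_of_nonneg (hG0 _)]
    exact hx
  -- the key one–step recursion for R k = ∫_{k ≤ T} G (A k)
  obtain ⟨R, hR_def⟩ : ∃ R : ℕ → ℝ,
      R = fun k => ∫ x in {x | k ≤ T x}, G (A k x) ∂μ := ⟨_, rfl⟩
  have hTm' : ∀ k : ℕ, MeasurableSet[F k] {x | k ≤ T x} := fun k => by simpa using hT.measurableSet_ge k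
  have hTm : ∀ k : ℕ, MeasurableSet {x | k ≤ T x} := fun k => F.le k _ (hTm' k)
  have hRnonneg : ∀ k, 0 ≤ R k := by
    intro k
    rw [hR_def]
    exact setIntegral_nonneg (hTm k) (fun x _ => hG0 _)
  have hkey : ∀ k : ℕ, R (k+1) ≤ ρ * R k + z := by
    intro k
    have h := aux_key hp hp1 hγ0 hγ1 hᾱ hαmax1 hz_def hρ_def hA hApos hT
      (hdich k) (hprob k) hG_def hGmeas hGint
    rw [hR_def]
    exact h
  have hR0 : R 0 ≤ 1 := by
    have h1 : ∀ x, G (A 0 x) = 1 := fun x => hGbig _ (hApos 0 x) (hA0' x)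
    rw [hR_def]
    simp only [h1]
    rw [setIntegral_const, smul_eq_mul, mul_one]
    exact ENNReal.toReal_le_of_le_ofReal zero_le_one (by simpa using prob_le_one)
  have hRB : ∀ k, R k ≤ B := by
    intro k
    induction k with
    | zero => rw [hB_def]; linarith
    | succ k ih =>
      have h1 := hkey k
      nlinarith [mul_le_mul_of_nonneg_left ih hρ0.le]
  -- pointwise bound on the oracle cost
  obtain ⟨Dc, hDc_def⟩ : ∃ Dc : ℝ, Dc = c₁ / (κ * ᾱ) ^ 2 := ⟨_, rfl⟩
  have hDc0 : 0 ≤ Dc := by rw [hDc_def]; positivity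
  have hocG : ∀ (k : ℕ) x, c₁ / (min τ (κ * A k x)) ^ 2 ≤ Dc * G (A k x) := by
    intro k x
    rw [hDc_def, hG_def]
    exact aux_ocG hᾱ hκ hτ hc₁ (hApos k x)
  -- rewrite the truncated sum using indicators
  obtain ⟨oc, hoc_def⟩ : ∃ oc : ℕ → Ω → ℝ,
      oc = fun k x => c₀ + c₁ / (min τ (κ * A k x)) ^ 2 := ⟨_, rfl⟩
  have hsum : ∀ x, (∑ k ∈ Finset.Icc 1 (min (T x) n), oc k x)
      = ∑ k ∈ Finset.Icc 1 n, Set.indicator {x' | k ≤ T x'} (oc k) x := by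
    intro x
    rw [show Finset.Icc 1 (min (T x) n)
        = (Finset.Icc 1 n).filter (fun k => k ≤ T x) by
      ext m; simp only [Finset.mem_filter, Finset.mem_Icc, le_min_iff]; omega]
    rw [Finset.sum_filter]
    refine Finset.sum_congr rfl (fun k _ => ?_)
    by_cases hk : k ≤ T x <;>
      simp [Set.indicator_apply, Set.mem_setOf_eq, hk]
  have hocm : ∀ k : ℕ, Measurable (oc k) := by
    intro k
    rw [hoc_def]
    exact (measurable_const.div
      ((measurable_const.min (measurable_const.mul (hAm k))).pow measurable_const)).const_add c₀
  have hocnn : ∀ k x, 0 ≤ oc k x := by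
    intro k x
    have hApx := hApos k x
    have hmin0 : 0 < min τ (κ * A k x) :=
      lt_min (lt_of_lt_of_le (by positivity) hτ) (by positivity)
    rw [hoc_def]
    positivity
  have hocint : ∀ k : ℕ, Integrable (oc k) μ := by
    intro k
    refine Integrable.mono' (integrable_const (c₀ + Dc * ((γ ^ k)⁻¹) ^ 2))
      (hocm k).aestronglyMeasurable ?_
    filter_upwards [hGb k] with x hx
    rw [Real.norm_eq_abs, abs_of_nonneg (hocnn k x)]
    have h1 := hocG k x
    have h2 : Dc * G (A k x) ≤ Dc * ((γ ^ k)⁻¹) ^ 2 := mul_le_mul_of_nonneg_left hx hDc0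
    rw [hoc_def]
    simp only
    linarith
  have hindint : ∀ k : ℕ, Integrable (Set.indicator {x' | k ≤ T x'} (oc k)) μ :=
    fun k => (hocint k).indicator (hTm k)
  -- the integral bound for each k
  have hterm : ∀ k : ℕ, ∫ x, Set.indicator {x' | k ≤ T x'} (oc k) x ∂μ ≤ c₀ + Dc * B := by
    intro k
    rw [integral_indicator (hTm k)]
    have h1 : ∫ x in {x' | k ≤ T x'}, oc k x ∂μ
        ≤ ∫ x in {x' | k ≤ T x'}, (c₀ + Dc * G (A k x)) ∂μ := by
      refine setIntegral_mono_on ((hocint k).integrableOn)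
        (((integrable_const c₀).add ((hGint k).const_mul Dc)).integrableOn) (hTm k) ?_
      intro x _
      have h2 := hocG k x
      rw [hoc_def]; simp only; linarith
    have h2 : ∫ x in {x' | k ≤ T x'}, (c₀ + Dc * G (A k x)) ∂μ
        = c₀ * (μ {x' | k ≤ T x'}).toReal + Dc * ∫ x in {x' | k ≤ T x'}, G (A k x) ∂μ := by
      rw [integral_add (integrableOn_const (C := c₀) (measure_lt_top μ _).ne)
        (((hGint k).const_mul Dc).integrableOn)]
      rw [setIntegral_const, smul_eq_mul, integral_const_mul, measureReal_def]
      ring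
    have h3 : (μ {x' | k ≤ T x'}).toReal ≤ 1 := by
      exact ENNReal.toReal_le_of_le_ofReal zero_le_one (by simpa using prob_le_one)
    have h4 : ∫ x in {x' | k ≤ T x'}, G (A k x) ∂μ ≤ B := by
      have := hRB k; rw [hR_def] at this; exact this
    have h5 : 0 ≤ ∫ x in {x' | k ≤ T x'}, G (A k x) ∂μ := by
      have := hRnonneg k; rw [hR_def] at this; exact this
    nlinarith
  -- exponents
  have hloginv : 0 < Real.log (1/γ) := Real.log_pos (by rw [lt_div_iff₀ hγ0]; linarith)
  have hlogpq : 0 < Real.log (p/(1-p)) := Real.log_pos ((one_lt_div hq0).2 (by linarith))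
  obtain ⟨e, he_def⟩ : ∃ e : ℝ,
      e = 2 * Real.log (1/γ) / Real.log (p/(1-p)) := ⟨_, rfl⟩
  have he0 : 0 ≤ e := by rw [he_def]; positivity
  have hrpow1 : 1 ≤ (n:ℝ) ^ e :=
    Real.one_le_rpow (by exact_mod_cast Nat.one_le_of_lt hn) he0
  have hlogn : Real.log 2 ≤ Real.log n := Real.log_le_log (by norm_num) (by exact_mod_cast hn)
  have hlogn0 : 0 ≤ Real.log n := le_trans hlog2.le hlogn
  have hBC : B ≤ C * (Real.log n * (n:ℝ) ^ e) := by
    have h1 : Real.log 2 ≤ Real.log n * (n:ℝ) ^ e := by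
      nlinarith [mul_le_mul_of_nonneg_left hrpow1 hlogn0]
    have h2 : C * Real.log 2 ≤ C * (Real.log n * (n:ℝ) ^ e) :=
      mul_le_mul_of_nonneg_left h1 (by linarith)
    linarith
  have hgoal : ∫ x, (∑ k ∈ Finset.Icc 1 (min (T x) n), oc k x) ∂μ
      ≤ C * (c₀ * n + Dc * n * Real.log n * (n:ℝ) ^ e) := by
    calc ∫ x, (∑ k ∈ Finset.Icc 1 (min (T x) n), oc k x) ∂μ
        = ∑ k ∈ Finset.Icc 1 n, ∫ x, Set.indicator {x' | k ≤ T x'} (oc k) x ∂μ := by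
          rw [← integral_finset_sum _ (fun k _ => hindint k)]
          exact integral_congr_ae (ae_of_all _ fun x => hsum x)
      _ ≤ ∑ k ∈ Finset.Icc 1 n, (c₀ + Dc * B) :=
          Finset.sum_le_sum (fun k _ => hterm k)
      _ = n * (c₀ + Dc * B) := by
          rw [Finset.sum_const, Nat.card_Icc]
          simp only [Nat.add_sub_cancel, nsmul_eq_mul]
      _ ≤ C * (c₀ * n + Dc * n * Real.log n * (n:ℝ) ^ e) := by
          have hn0 : (0:ℝ) ≤ n := Nat.cast_nonneg n
          have h1 : (n:ℝ) * c₀ ≤ C * (c₀ * n) := by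
            nlinarith [mul_nonneg (mul_nonneg (sub_nonneg.2 hC1) hc₀) hn0]
          have h2 : (n:ℝ) * (Dc * B) ≤ Dc * ↑n * (C * (Real.log n * (n:ℝ) ^ e)) := by
            calc (n:ℝ) * (Dc * B) = Dc * ↑n * B := by ring
              _ ≤ Dc * ↑n * (C * (Real.log n * (n:ℝ) ^ e)) :=
                  mul_le_mul_of_nonneg_left hBC (mul_nonneg hDc0 hn0)
          have h3 : C * (c₀ * ↑n + Dc * ↑n * Real.log ↑n * (n:ℝ) ^ e)
              = C * (c₀ * ↑n) + Dc * ↑n * (C * (Real.log ↑n * (n:ℝ) ^ e)) := by ring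
          have h4 : (n:ℝ) * (c₀ + Dc * B) = ↑n * c₀ + ↑n * (Dc * B) := by ring
          have h5 : C * (c₀ * ↑n) = C * c₀ * ↑n := by ring
          linarith [h1, h2]
  rw [hoc_def] at hgoal
  rw [hDc_def, he_def] at hgoal
  exact hgoal
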